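/- arXiv:1406.0111 — 2 statements merged into one kernel-verified Lean document; each statement's English description precedes it below -/
import Mathlib

section
/- For the standard skew-normal density f(z) = 2 φ(z) Φ(λ z) on ℝ, the negentropy term E[ln(2 Φ(λ W))] (with W skew-normal of shape λ) is nonnegative, and consequently S[f] ≤ S[φ] = (1/2) ln(2π e). -/
open MeasureTheory Real Set

noncomputable def phi (x : ℝ) : ℝ := (Real.sqrt (2 * Real.pi))⁻¹ * Real.exp (-x ^ 2 / 2)

noncomputable def Phi (x : ℝ) : ℝ := ∫ t in Set.Iic x, phi t

lemma phi_pos (x : ℝ) : 0 < phi x := by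
  apply mul_pos (inv_pos.2 (Real.sqrt_pos.2 (by positivity))) (Real.exp_pos _)

lemma phi_even (x : ℝ) : phi (-x) = phi x := by simp [phi]

lemma continuous_phi : Continuous phi := by
  unfold phi; fun_prop

lemma integrable_phi : Integrable phi := by
  have h : Integrable (fun x : ℝ => Real.exp (-(1/2 : ℝ) * x ^ 2)) :=
    integrable_exp_neg_mul_sq (by norm_num)
  have := h.const_mul (Real.sqrt (2 * Real.pi))⁻¹
  refine this.congr (Filter.Eventually.of_forall fun x => ?_)
  simp only [phi]; ring_nf

lemma integral_phi : ∫ x, phi x = 1 := by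
  have h : ∫ x : ℝ, Real.exp (-(1/2 : ℝ) * x ^ 2) = Real.sqrt (π / (1/2)) :=
    integral_gaussian (1/2)
  have h2 : ∫ x, phi x = (Real.sqrt (2 * Real.pi))⁻¹ * ∫ x : ℝ, Real.exp (-(1/2:ℝ) * x ^ 2) := by
    rw [← integral_const_mul]
    congr 1; ext x; simp only [phi]; ring_nf
  rw [h2, h]
  rw [show π / (1/2 : ℝ) = 2 * π by ring]
  field_simp

lemma Phi_mono : Monotone Phi := by
  intro a b hab
  exact setIntegral_mono_set integrable_phi.integrableOn
    (Filter.Eventually.of_forall fun x => (phi_pos x).le)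
    (HasSubset.Subset.eventuallyLE (Iic_subset_Iic.2 hab))

lemma measurable_Phi : Measurable Phi := Phi_mono.measurable

lemma Phi_nonneg (x : ℝ) : 0 ≤ Phi x :=
  setIntegral_nonneg measurableSet_Iic fun t _ => (phi_pos t).le

lemma Phi_pos (x : ℝ) : 0 < Phi x := by
  have h1 : ∫ t in Set.Ioc (x-1) x, phi t ≤ Phi x :=
    setIntegral_mono_set integrable_phi.integrableOn
      (Filter.Eventually.of_forall fun t => (phi_pos t).le)
      (HasSubset.Subset.eventuallyLE Ioc_subset_Iic_self)
  refine lt_of_lt_of_le ?_ h1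
  rw [← intervalIntegral.integral_of_le (by linarith)]
  apply intervalIntegral.intervalIntegral_pos_of_pos
  · exact continuous_phi.intervalIntegrable _ _
  · exact fun t => phi_pos t
  · linarith

lemma Phi_add_neg (x : ℝ) : Phi x + Phi (-x) = 1 := by
  have h1 : Phi (-x) = ∫ t in Set.Ioi x, phi t := by
    have : Phi (-x) = ∫ t in Set.Iic (-x), phi (-t) := by
      unfold Phi; congr 1; ext t; rw [phi_even]
    rw [this, integral_comp_neg_Iic, neg_neg]
  rw [h1, ← integral_phi]
  exact intervalIntegral.integral_Iic_add_Ioi integrable_phi.integrableOn integrable_phi.integrableOn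

lemma Phi_lt_one (x : ℝ) : Phi x < 1 := by
  have := Phi_add_neg x
  have := Phi_pos (-x)
  linarith

lemma integrable_sq_exp : Integrable (fun x : ℝ => x ^ 2 * Real.exp (-(1/2:ℝ) * x ^ 2)) := by
  have h := integrable_rpow_mul_exp_neg_mul_sq (b := 1/2) (by norm_num) (s := 2) (by norm_num)
  refine h.congr (Filter.Eventually.of_forall fun x => ?_)
  have : (x : ℝ) ^ (2:ℝ) = x ^ (2:ℕ) := by
    rw [show ((2:ℝ) = ((2:ℕ):ℝ)) by norm_num, Real.rpow_natCast]
  simp only [this]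

lemma tendsto_xexp_atTop : Filter.Tendsto (fun x : ℝ => -x * Real.exp (-x ^ 2 / 2))
    Filter.atTop (nhds 0) := by
  have h := rpow_mul_exp_neg_mul_sq_isLittleO_exp_neg (b := 1/2) (by norm_num) (s := 1)
  have h2 : Filter.Tendsto (fun x : ℝ => Real.exp (-(1/2) * x)) Filter.atTop (nhds 0) := by
    have hlin : Filter.Tendsto (fun x : ℝ => -(1/2) * x) Filter.atTop Filter.atBot :=
      Filter.tendsto_id.const_mul_atTop_of_neg (by norm_num)
    exact Real.tendsto_exp_atBot.comp hlin
  have h3 := h.isBigO.trans_tendsto h2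
  have h4 : Filter.Tendsto (fun x : ℝ => x * Real.exp (-x ^ 2 / 2)) Filter.atTop (nhds 0) := by
    refine h3.congr' ?_
    filter_upwards [Filter.eventually_gt_atTop 0] with x hx
    rw [Real.rpow_one]
    ring_nf
  simpa using h4.neg

lemma integral_sq_phi : ∫ x : ℝ, x ^ 2 * phi x = 1 := by
  set F : ℝ → ℝ := fun x => -x * Real.exp (-x ^ 2 / 2) with hF
  set g : ℝ → ℝ := fun x => (x ^ 2 - 1) * Real.exp (-x ^ 2 / 2) with hg
  have hderiv : ∀ x : ℝ, HasDerivAt F (g x) x := by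
    intro x
    have h1 : HasDerivAt (fun x : ℝ => -x) (-1) x := (hasDerivAt_id x).neg
    have h2 : HasDerivAt (fun x : ℝ => Real.exp (-x ^ 2 / 2)) (-x * Real.exp (-x ^ 2 / 2)) x := by
      have h3 : HasDerivAt (fun x : ℝ => -x ^ 2 / 2) (-x) x := by
        have := ((hasDerivAt_pow 2 x).neg).div_const 2
        convert this using 1
        rotate_left 3
        simp; ring
        all_goals rfl
      simpa [mul_comm] using h3.exp
    have := h1.mul h2
    convert this using 1
    rotate_left 3
    simp [hg]; ring
    all_goals rfl
  have hgint : Integrable g := by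
    have h1 : Integrable (fun x : ℝ => Real.exp (-(1/2:ℝ) * x ^ 2)) :=
      integrable_exp_neg_mul_sq (by norm_num)
    have := integrable_sq_exp.sub h1
    refine this.congr (Filter.Eventually.of_forall fun x => ?_)
    simp only [hg, Pi.sub_apply]; ring_nf
  have htop : Filter.Tendsto F Filter.atTop (nhds 0) := tendsto_xexp_atTop
  have hbot : Filter.Tendsto F Filter.atBot (nhds 0) := by
    have h1 : Filter.Tendsto (fun x : ℝ => F (-x)) Filter.atTop (nhds 0) := by
      have he : (fun x : ℝ => F (-x)) = fun x => -F x := by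
        funext x; simp only [hF]; ring_nf
      rw [he]
      simpa using htop.neg
    have h2 := h1.comp Filter.tendsto_neg_atBot_atTop
    have he2 : ((fun x : ℝ => F (-x)) ∘ Neg.neg) = F := by
      funext x; simp [Function.comp]
    rwa [he2] at h2
  have hIoi : ∫ x in Set.Ioi (0:ℝ), g x = 0 - F 0 :=
    integral_Ioi_of_hasDerivAt_of_tendsto' (fun x _ => hderiv x) hgint.integrableOn htop
  have hIic : ∫ x in Set.Iic (0:ℝ), g x = F 0 - 0 :=
    integral_Iic_of_hasDerivAt_of_tendsto' (fun x _ => hderiv x) hgint.integrableOn hbot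
  have htot : ∫ x : ℝ, g x = 0 := by
    rw [← intervalIntegral.integral_Iic_add_Ioi hgint.integrableOn hgint.integrableOn,
      hIoi, hIic]
    simp [hF]
  -- ∫ x² exp(-x²/2) = ∫ exp(-x²/2)
  have hexp_int : Integrable (fun x : ℝ => Real.exp (-x ^ 2 / 2)) := by
    have h1 : Integrable (fun x : ℝ => Real.exp (-(1/2:ℝ) * x ^ 2)) :=
      integrable_exp_neg_mul_sq (by norm_num)
    refine h1.congr (Filter.Eventually.of_forall fun x => ?_)
    ring_nf
  have hsq_int : Integrable (fun x : ℝ => x ^ 2 * Real.exp (-x ^ 2 / 2)) := by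
    refine integrable_sq_exp.congr (Filter.Eventually.of_forall fun x => ?_)
    ring_nf
  have hkey : ∫ x : ℝ, x ^ 2 * Real.exp (-x ^ 2 / 2) = ∫ x : ℝ, Real.exp (-x ^ 2 / 2) := by
    have := integral_sub hsq_int hexp_int
    have h2 : ∫ x : ℝ, (x ^ 2 * Real.exp (-x ^ 2 / 2) - Real.exp (-x ^ 2 / 2)) = 0 := by
      rw [← htot]; congr 1; ext x; simp only [hg]; ring
    rw [h2] at this
    linarith [this]
  have hval : ∫ x : ℝ, Real.exp (-x ^ 2 / 2) = Real.sqrt (2 * π) := by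
    have h := integral_gaussian (1/2)
    rw [show π / (1/2 : ℝ) = 2 * π by ring] at h
    rw [← h]; congr 1; ext x; ring_nf
  have : ∫ x : ℝ, x ^ 2 * phi x = (Real.sqrt (2 * π))⁻¹ * ∫ x : ℝ, x ^ 2 * Real.exp (-x ^ 2 / 2) := by
    rw [← integral_const_mul]; congr 1; ext x; simp only [phi]; ring
  rw [this, hkey, hval]
  rw [inv_mul_cancel₀ (by positivity)]

lemma measurable_f (lam : ℝ) : Measurable (fun z : ℝ => 2 * phi z * Phi (lam * z)) := by
  exact ((measurable_const.mul continuous_phi.measurable).mul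
    (measurable_Phi.comp (measurable_const.mul measurable_id)))

lemma f_nonneg (lam : ℝ) (z : ℝ) : 0 ≤ 2 * phi z * Phi (lam * z) := by
  have := phi_pos z; have := Phi_nonneg (lam * z); positivity

lemma f_le (lam : ℝ) (z : ℝ) : 2 * phi z * Phi (lam * z) ≤ 2 * phi z := by
  have h1 := phi_pos z
  have h2 := Phi_lt_one (lam * z)
  nlinarith

lemma integrable_f (lam : ℝ) : Integrable (fun z : ℝ => 2 * phi z * Phi (lam * z)) := by
  refine Integrable.mono (integrable_phi.const_mul 2) (measurable_f lam).aestronglyMeasurable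
    (Filter.Eventually.of_forall fun z => ?_)
  rw [Real.norm_eq_abs, Real.norm_eq_abs, abs_of_nonneg (f_nonneg lam z),
    abs_of_nonneg (by have := phi_pos z; positivity : (0:ℝ) ≤ 2 * phi z)]
  exact f_le lam z

lemma symm_add_integral {g : ℝ → ℝ} (hg : Integrable g) :
    2 * ∫ z, g z = ∫ z, (g z + g (-z)) := by
  rw [integral_add hg hg.comp_neg, MeasureTheory.integral_neg_eq_self g volume]
  ring

lemma f_symm_add (lam : ℝ) (z : ℝ) :
    (2 * phi z * Phi (lam * z)) + (2 * phi (-z) * Phi (lam * -z)) = 2 * phi z := by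
  rw [phi_even, show lam * -z = -(lam * z) by ring]
  have := Phi_add_neg (lam * z)
  nlinarith [phi_pos z]

lemma integral_f (lam : ℝ) : ∫ z : ℝ, 2 * phi z * Phi (lam * z) = 1 := by
  have h := symm_add_integral (integrable_f lam)
  have h2 : ∫ z : ℝ, ((2 * phi z * Phi (lam * z)) + (2 * phi (-z) * Phi (lam * -z)))
      = ∫ z : ℝ, 2 * phi z := by
    congr 1; funext z; exact f_symm_add lam z
  rw [h2, integral_const_mul, integral_phi] at h
  linarith

lemma integrable_sq_f (lam : ℝ) :
    Integrable (fun z : ℝ => z ^ 2 * (2 * phi z * Phi (lam * z))) := by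
  have hb : Integrable (fun z : ℝ => 2 * (z ^ 2 * phi z)) := by
    have : Integrable (fun x : ℝ => x ^ 2 * phi x) := by
      have h1 : Integrable (fun x : ℝ => (Real.sqrt (2 * Real.pi))⁻¹ *
          (x ^ 2 * Real.exp (-(1/2:ℝ) * x ^ 2))) := integrable_sq_exp.const_mul _
      refine h1.congr (Filter.Eventually.of_forall fun x => ?_)
      simp only [phi]; ring_nf
    exact this.const_mul 2
  refine Integrable.mono hb ((measurable_id.pow_const 2).mul (measurable_f lam)).aestronglyMeasurable
    (Filter.Eventually.of_forall fun z => ?_)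
  rw [Real.norm_eq_abs, Real.norm_eq_abs,
    abs_of_nonneg (by have := f_nonneg lam z; positivity : (0:ℝ) ≤ z ^ 2 * (2 * phi z * Phi (lam * z))),
    abs_of_nonneg (by have := phi_pos z; positivity : (0:ℝ) ≤ 2 * (z ^ 2 * phi z))]
  nlinarith [f_le lam z, sq_nonneg z, f_nonneg lam z]

lemma integral_sq_f (lam : ℝ) : ∫ z : ℝ, z ^ 2 * (2 * phi z * Phi (lam * z)) = 1 := by
  have h := symm_add_integral (integrable_sq_f lam)
  have h2 : ∫ z : ℝ, (z ^ 2 * (2 * phi z * Phi (lam * z)) +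
      (-z) ^ 2 * (2 * phi (-z) * Phi (lam * -z))) = ∫ z : ℝ, 2 * (z ^ 2 * phi z) := by
    congr 1; funext z
    have := f_symm_add lam z
    nlinarith [this]
  rw [h2, integral_const_mul, integral_sq_phi] at h
  linarith

lemma log_ge_one_sub_inv {t : ℝ} (ht : 0 < t) : 1 - 1/t ≤ Real.log t := by
  have h := Real.log_le_sub_one_of_pos (inv_pos.2 ht)
  rw [Real.log_inv] at h
  have : (t:ℝ)⁻¹ = 1/t := by rw [one_div]
  linarith [this ▸ h]

lemma plog_ge {p : ℝ} (h0 : 0 < p) : p - 1/2 ≤ p * Real.log (2*p) := by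
  have h := log_ge_one_sub_inv (by linarith : (0:ℝ) < 2*p)
  have h2 := mul_le_mul_of_nonneg_left h h0.le
  have h3 : p * (1 - 1/(2*p)) = p - 1/2 := by field_simp
  linarith [h3 ▸ h2]

lemma plog_le {p : ℝ} (h0 : 0 < p) (h1 : p ≤ 1) : p * Real.log (2*p) ≤ 1 := by
  have h := Real.log_le_sub_one_of_pos (by linarith : (0:ℝ) < 2*p)
  have h2 := mul_le_mul_of_nonneg_left h h0.le
  nlinarith

lemma plog_abs_le {p : ℝ} (h0 : 0 < p) (h1 : p ≤ 1) : |p * Real.log (2*p)| ≤ 1 := by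
  rw [abs_le]
  constructor
  · linarith [plog_ge h0]
  · exact plog_le h0 h1

lemma binary_nonneg {p : ℝ} (h0 : 0 < p) (h1 : p < 1) :
    0 ≤ p * Real.log (2*p) + (1-p) * Real.log (2*(1-p)) := by
  have h2 := plog_ge h0
  have h3 := plog_ge (by linarith : (0:ℝ) < 1 - p)
  linarith

lemma measurable_g (lam : ℝ) :
    Measurable (fun w : ℝ => Real.log (2 * Phi (lam * w)) * (2 * phi w * Phi (lam * w))) := by
  have hm : Measurable (fun w : ℝ => Phi (lam * w)) :=
    measurable_Phi.comp (measurable_const.mul measurable_id)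
  exact ((measurable_const.mul hm).log).mul (measurable_f lam)

lemma integrable_g (lam : ℝ) :
    Integrable (fun w : ℝ => Real.log (2 * Phi (lam * w)) * (2 * phi w * Phi (lam * w))) := by
  refine Integrable.mono (integrable_phi.const_mul 2) (measurable_g lam).aestronglyMeasurable
    (Filter.Eventually.of_forall fun w => ?_)
  rw [Real.norm_eq_abs, Real.norm_eq_abs,
    abs_of_nonneg (by have := phi_pos w; positivity : (0:ℝ) ≤ 2 * phi w)]
  have h1 := phi_pos w
  have h2 := Phi_pos (lam * w)
  have h3 := Phi_lt_one (lam * w)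
  have key : |Real.log (2 * Phi (lam * w)) * (2 * phi w * Phi (lam * w))|
      = (2 * phi w) * |Phi (lam * w) * Real.log (2 * Phi (lam * w))| := by
    rw [show Real.log (2 * Phi (lam * w)) * (2 * phi w * Phi (lam * w))
        = (2 * phi w) * (Phi (lam * w) * Real.log (2 * Phi (lam * w))) by ring, abs_mul,
      abs_of_nonneg (by positivity : (0:ℝ) ≤ 2 * phi w)]
  rw [key]
  have := plog_abs_le h2 h3.le
  nlinarith [abs_nonneg (Phi (lam * w) * Real.log (2 * Phi (lam * w)))]

lemma negentropy_term_nonneg (lam : ℝ) :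
    0 ≤ ∫ w : ℝ, Real.log (2 * Phi (lam * w)) * (2 * phi w * Phi (lam * w)) := by
  have h := symm_add_integral (integrable_g lam)
  have h2 : 0 ≤ ∫ w : ℝ, (Real.log (2 * Phi (lam * w)) * (2 * phi w * Phi (lam * w)) +
      Real.log (2 * Phi (lam * -w)) * (2 * phi (-w) * Phi (lam * -w))) := by
    refine integral_nonneg fun w => ?_
    simp only [Pi.zero_apply]
    rw [phi_even, show lam * -w = -(lam * w) by ring]
    have h0 := Phi_pos (lam * w)
    have h1 := Phi_lt_one (lam * w)
    have hq : Phi (-(lam * w)) = 1 - Phi (lam * w) := by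
      have := Phi_add_neg (lam * w); linarith
    rw [hq]
    have hb := binary_nonneg h0 h1
    have hp := phi_pos w
    nlinarith [mul_nonneg hp.le hb]
  linarith [h ▸ h2]

lemma f_log_f (lam z : ℝ) : (2 * phi z * Phi (lam*z)) * Real.log (2 * phi z * Phi (lam*z)) =
    Real.log (2 * Phi (lam*z)) * (2*phi z*Phi (lam*z))
    + (-(1/2) * Real.log (2*π)) * (2*phi z*Phi (lam*z))
    + (-(1/2)) * (z^2 * (2*phi z*Phi (lam*z))) := by
  have h1 := phi_pos z; have h2 := Phi_pos (lam*z)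
  have hlog : Real.log (2 * phi z * Phi (lam*z)) = Real.log (phi z) + Real.log (2 * Phi (lam*z)) := by
    rw [show 2 * phi z * Phi (lam*z) = phi z * (2 * Phi (lam*z)) by ring,
      Real.log_mul (ne_of_gt h1) (by positivity)]
  have hphi : Real.log (phi z) = -(1/2) * Real.log (2*π) - z^2/2 := by
    unfold phi
    rw [Real.log_mul (by positivity) (Real.exp_ne_zero _), Real.log_inv, Real.log_exp,
      Real.log_sqrt (by positivity)]
    ring
  rw [hlog, hphi]; ring

/-- For the standard skew-normal density f(z) = 2 φ(z) Φ(λ z), the negentropy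
    E[ln(2Φ(λW))] (W with density f) is nonnegative, and hence
    S[f] ≤ S[φ] = (1/2) ln(2π e). -/
theorem skew_normal_negentropy_nonneg (lam : ℝ) :
    0 ≤ ∫ w : ℝ, Real.log (2 * Phi (lam * w)) * (2 * phi w * Phi (lam * w)) ∧
      -∫ z : ℝ, (2 * phi z * Phi (lam * z)) * Real.log (2 * phi z * Phi (lam * z)) ≤
        (1 / 2) * Real.log (2 * Real.pi * Real.exp 1) := by
  have hI := negentropy_term_nonneg lam
  refine ⟨hI, ?_⟩
  have h2 : Integrable (fun z : ℝ => (-(1/2) * Real.log (2*π)) * (2*phi z*Phi (lam*z))) :=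
    (integrable_f lam).const_mul _
  have h3 : Integrable (fun z : ℝ => (-(1/2:ℝ)) * (z^2 * (2*phi z*Phi (lam*z)))) :=
    (integrable_sq_f lam).const_mul _
  have hsum : ∫ z : ℝ, (2 * phi z * Phi (lam * z)) * Real.log (2 * phi z * Phi (lam * z))
      = (∫ w : ℝ, Real.log (2 * Phi (lam * w)) * (2 * phi w * Phi (lam * w)))
        + ((-(1/2) * Real.log (2*π)) * 1 + (-(1/2:ℝ)) * 1) := by
    have he : ∫ z : ℝ, (2 * phi z * Phi (lam * z)) * Real.log (2 * phi z * Phi (lam * z))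
        = ∫ z : ℝ, (Real.log (2 * Phi (lam*z)) * (2*phi z*Phi (lam*z))
          + ((-(1/2) * Real.log (2*π)) * (2*phi z*Phi (lam*z))
          + (-(1/2)) * (z^2 * (2*phi z*Phi (lam*z))))) := by
      congr 1; funext z; rw [f_log_f lam z]; ring
    have e1 : ∫ z : ℝ, (Real.log (2 * Phi (lam*z)) * (2*phi z*Phi (lam*z))
          + ((-(1/2) * Real.log (2*π)) * (2*phi z*Phi (lam*z))
          + (-(1/2)) * (z^2 * (2*phi z*Phi (lam*z)))))
        = (∫ z : ℝ, Real.log (2 * Phi (lam*z)) * (2*phi z*Phi (lam*z)))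
          + ∫ z : ℝ, ((-(1/2) * Real.log (2*π)) * (2*phi z*Phi (lam*z))
          + (-(1/2)) * (z^2 * (2*phi z*Phi (lam*z)))) :=
      integral_add (integrable_g lam) (h2.add h3)
    have e2 : ∫ z : ℝ, ((-(1/2) * Real.log (2*π)) * (2*phi z*Phi (lam*z))
          + (-(1/2)) * (z^2 * (2*phi z*Phi (lam*z))))
        = (∫ z : ℝ, (-(1/2) * Real.log (2*π)) * (2*phi z*Phi (lam*z)))
          + ∫ z : ℝ, (-(1/2)) * (z^2 * (2*phi z*Phi (lam*z))) :=
      integral_add h2 h3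
    rw [he, e1, e2, integral_const_mul, integral_const_mul, integral_f, integral_sq_f]
  have hlog : Real.log (2 * Real.pi * Real.exp 1) = Real.log (2*π) + 1 := by
    rw [Real.log_mul (by positivity) (Real.exp_ne_zero 1), Real.log_exp]
  rw [hsum, hlog]
  linarith
end

section
/- Azzalini's lemma: for any λ, τ ∈ ℝ and Z_N ∼ N(0,1), E[Φ(λ Z_N + τ)] = Φ(τ / √(1 + λ²)), where Φ is the standard normal cdf. -/
open MeasureTheory Real Set

lemma phi_nonneg (x : ℝ) : 0 ≤ phi x := by
  unfold phi
  positivity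

lemma Phi_le_one (x : ℝ) : Phi x ≤ 1 := by
  unfold Phi
  rw [← integral_phi]
  apply setIntegral_le_integral integrable_phi
  filter_upwards with y using phi_nonneg y

lemma Iic_translate (f : ℝ → ℝ) (b c : ℝ) :
    ∫ t in Iic (b + c), f t = ∫ s in Iic b, f (s + c) := by
  have h := (measurePreserving_add_right volume c).setIntegral_preimage_emb
    (measurableEmbedding_addRight c) f (Iic (b + c))
  rw [← h, preimage_add_const_Iic, add_sub_cancel_right]

lemma Iic_scale (f : ℝ → ℝ) (b : ℝ) {a : ℝ} (ha : 0 < a) :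
    ∫ s in Iic b, f s = a * ∫ u in Iic (b / a), f (a * u) := by
  have hmap : Measure.map (a * ·) volume = ENNReal.ofReal |a⁻¹| • volume :=
    Real.map_volume_mul_left ha.ne'
  have h1 : ∫ s in Iic b, f s ∂(Measure.map (a * ·) volume)
      = ∫ u in (a * ·) ⁻¹' Iic b, f (a * u) :=
    (measurableEmbedding_mulLeft₀ ha.ne').setIntegral_map f (Iic b)
  rw [hmap, preimage_const_mul_Iic₀ _ ha] at h1
  rw [Measure.restrict_smul, integral_smul_measure] at h1
  rw [abs_of_pos (inv_pos.mpr ha), ENNReal.toReal_ofReal (le_of_lt (inv_pos.mpr ha))] at h1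
  have := h1.symm
  rw [smul_eq_mul] at this
  field_simp at this ⊢
  linarith [this]

/-- Azzalini's lemma: for any λ, τ ∈ ℝ and Z_N ∼ N(0,1),
    E[Φ(λ Z_N + τ)] = Φ(τ / √(1 + λ²)). -/
theorem azzalini_lemma (lam τ : ℝ) :
    ∫ z : ℝ, Phi (lam * z + τ) * phi z = Phi (τ / Real.sqrt (1 + lam ^ 2)) := by
  set A : ℝ := 1 + lam ^ 2 with hA_def
  clear_value A
  have hA : 0 < A := by rw [hA_def]; positivity
  have hsA : 0 < Real.sqrt A := Real.sqrt_pos.mpr hA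
  have hsqA : Real.sqrt A ^ 2 = A := Real.sq_sqrt hA.le
  -- Step A: Phi (lam*z+τ) = ∫ s in Iic τ, phi (s + lam*z)
  have stepA : ∀ z : ℝ, Phi (lam * z + τ) = ∫ s in Iic τ, phi (s + lam * z) := by
    intro z
    unfold Phi
    rw [add_comm (lam * z) τ, Iic_translate phi τ (lam * z)]
  -- Step C: inner gaussian integral
  have stepC : ∀ s : ℝ, ∫ z : ℝ, phi (s + lam * z) * phi z
      = (Real.sqrt A)⁻¹ * phi (s / Real.sqrt A) := by
    intro s
    have hexp : ∀ z : ℝ, phi (s + lam * z) * phi z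
        = ((2 * π)⁻¹ * Real.exp (-s ^ 2 / (2 * A))) *
          Real.exp (-(A / 2) * (z + lam * s / A) ^ 2) := by
      intro z
      unfold phi
      rw [show ((Real.sqrt (2*π))⁻¹ * Real.exp (-(s + lam*z) ^ 2 / 2)) *
          ((Real.sqrt (2*π))⁻¹ * Real.exp (-z ^ 2 / 2))
          = ((Real.sqrt (2*π))⁻¹ * (Real.sqrt (2*π))⁻¹) *
            (Real.exp (-(s + lam*z) ^ 2 / 2) * Real.exp (-z ^ 2 / 2)) by ring]
      rw [← Real.exp_add, mul_assoc ((2*π : ℝ))⁻¹, ← Real.exp_add]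
      have h2π : (Real.sqrt (2*π))⁻¹ * (Real.sqrt (2*π))⁻¹ = (2*π)⁻¹ := by
        rw [← mul_inv, Real.mul_self_sqrt (by positivity)]
      rw [h2π]
      congr 1
      congr 1
      rw [hA_def]
      have h1 : (1 : ℝ) + lam ^ 2 ≠ 0 := by positivity
      field_simp
      ring
    have hint0 : ∫ z : ℝ, phi (s + lam * z) * phi z
        = ((2 * π)⁻¹ * Real.exp (-s ^ 2 / (2 * A))) *
          ∫ z : ℝ, Real.exp (-(A / 2) * (z + lam * s / A) ^ 2) := by
      simp_rw [hexp]
      rw [integral_const_mul]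
    have htrans := MeasureTheory.integral_add_right_eq_self (μ := volume)
      (fun u : ℝ => Real.exp (-(A / 2) * u ^ 2)) (lam * s / A)
    rw [hint0, htrans, integral_gaussian]
    unfold phi
    rw [div_pow, hsqA]
    rw [show (π / (A / 2) : ℝ) = 2 * π / A by ring,
      Real.sqrt_div (by positivity : (0:ℝ) ≤ 2 * π) A]
    rw [show (-(s ^ 2 / A) / 2 : ℝ) = -s ^ 2 / (2 * A) by ring]
    have h2π : Real.sqrt (2 * π) * Real.sqrt (2 * π) = 2 * π :=
      Real.mul_self_sqrt (by positivity)
    have hs2π : (0:ℝ) < Real.sqrt (2 * π) := Real.sqrt_pos.mpr (by positivity)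
    have h2 : Real.sqrt 2 * Real.sqrt 2 = 2 := Real.mul_self_sqrt (by norm_num)
    have hπ' : Real.sqrt π * Real.sqrt π = π := Real.mul_self_sqrt pi_pos.le
    field_simp
    linear_combination h2π
  -- Fubini integrability
  have hcont : Continuous (fun p : ℝ × ℝ => phi (p.2 + lam * p.1) * phi p.1) :=
    (continuous_phi.comp (continuous_snd.add (continuous_const.mul continuous_fst))).mul
      (continuous_phi.comp continuous_fst)
  have hm : AEStronglyMeasurable (fun p : ℝ × ℝ => phi (p.2 + lam * p.1) * phi p.1)
      (volume.prod (volume.restrict (Iic τ))) := hcont.aestronglyMeasurable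
  have hInt : Integrable (fun p : ℝ × ℝ => phi (p.2 + lam * p.1) * phi p.1)
      (volume.prod (volume.restrict (Iic τ))) := by
    rw [integrable_prod_iff hm]
    constructor
    · filter_upwards with z
      exact ((integrable_phi.comp_add_right (lam * z)).restrict).mul_const (phi z)
    · apply Integrable.mono' integrable_phi hm.norm.integral_prod_right'
      filter_upwards with z
      have heq : (fun s => ‖phi (s + lam * z) * phi z‖) = fun s => phi (s + lam * z) * phi z := by
        ext s
        rw [Real.norm_eq_abs, abs_of_nonneg (mul_nonneg (phi_nonneg _) (phi_nonneg _))]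
      have hval : ∫ s in Iic τ, ‖phi (s + lam * z) * phi z‖ = Phi (lam * z + τ) * phi z := by
        rw [heq, integral_mul_const, ← stepA z]
      rw [Real.norm_eq_abs, hval, abs_of_nonneg (mul_nonneg (Phi_nonneg _) (phi_nonneg _))]
      calc Phi (lam * z + τ) * phi z ≤ 1 * phi z :=
            mul_le_mul_of_nonneg_right (Phi_le_one _) (phi_nonneg _)
        _ = phi z := one_mul _
  calc ∫ z : ℝ, Phi (lam * z + τ) * phi z
      = ∫ z : ℝ, ∫ s in Iic τ, phi (s + lam * z) * phi z := by
        congr 1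
        ext z
        rw [stepA z, ← integral_mul_const]
    _ = ∫ s in Iic τ, ∫ z : ℝ, phi (s + lam * z) * phi z :=
        integral_integral_swap hInt
    _ = ∫ s in Iic τ, (Real.sqrt A)⁻¹ * phi (s / Real.sqrt A) := by
        exact integral_congr_ae (Filter.Eventually.of_forall fun s => stepC s)
    _ = Real.sqrt A * ∫ u in Iic (τ / Real.sqrt A),
          (Real.sqrt A)⁻¹ * phi (Real.sqrt A * u / Real.sqrt A) :=
        Iic_scale _ _ hsA
    _ = Phi (τ / Real.sqrt A) := by
        unfold Phi
        have : ∀ u : ℝ, (Real.sqrt A)⁻¹ * phi (Real.sqrt A * u / Real.sqrt A)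
            = (Real.sqrt A)⁻¹ * phi u := by
          intro u
          rw [mul_div_cancel_left₀ _ hsA.ne']
        simp_rw [this]
        rw [integral_const_mul, ← mul_assoc, mul_inv_cancel₀ hsA.ne', one_mul]
end
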